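/- Let P be the set of pivot words for matrices C₁,…,C_m ∈ Mat_{n,n}(K). Then {C_w : w ∈ P} is a basis of the unital subalgebra of Mat_{n,n}(K) generated by C₁,…,C_m. -/

import Mathlib

/-- Length-then-lexicographic order on words over `Fin m`. -/
def WordLT {m : ℕ} (w₁ w₂ : List (Fin m)) : Prop :=
  w₁.length < w₂.length ∨ (w₁.length = w₂.length ∧ List.Lex (· < ·) w₁ w₂)

/-- `w` is a pivot if `C_w` does not lie in the span of the `C_u` for `u ≺ w`. -/
def Pivot {K : Type*} [Field K] {n m : ℕ} (C : Fin m → Matrix (Fin n) (Fin n) K)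
    (w : List (Fin m)) : Prop :=
  ((w.map C).prod) ∉ Submodule.span K
    {M : Matrix (Fin n) (Fin n) K | ∃ u : List (Fin m), WordLT u w ∧ M = (u.map C).prod}

namespace PivotAux

variable {m : ℕ}

/-- Numeric encoding of words, strictly monotone for the length-lex order. -/
def enc : List (Fin m) → ℕ
  | [] => 0
  | a :: t => ((a : ℕ) + 1) * (m + 1) ^ t.length + enc t

lemma enc_lt (w : List (Fin m)) : enc w < (m + 1) ^ w.length := by
  induction w with
  | nil => simp [enc]
  | cons a t ih =>
    have ha : (a : ℕ) + 1 ≤ m := a.2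
    calc enc (a :: t) = ((a : ℕ) + 1) * (m + 1) ^ t.length + enc t := rfl
      _ < ((a : ℕ) + 1) * (m + 1) ^ t.length + (m + 1) ^ t.length := by omega
      _ = ((a : ℕ) + 2) * (m + 1) ^ t.length := by ring
      _ ≤ (m + 1) * (m + 1) ^ t.length := by
          exact Nat.mul_le_mul_right _ (by omega)
      _ = (m + 1) ^ (a :: t).length := by rw [List.length_cons, pow_succ]; ring

lemma le_enc (a : Fin m) (t : List (Fin m)) : (m + 1) ^ t.length ≤ enc (a :: t) := by
  have : (m + 1) ^ t.length ≤ ((a : ℕ) + 1) * (m + 1) ^ t.length :=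
    Nat.le_mul_of_pos_left _ (by omega)
  calc (m + 1) ^ t.length ≤ ((a : ℕ) + 1) * (m + 1) ^ t.length := this
    _ ≤ enc (a :: t) := Nat.le_add_right _ _

lemma enc_lt_of_length_lt {w₁ w₂ : List (Fin m)} (h : w₁.length < w₂.length) :
    enc w₁ < enc w₂ := by
  cases w₂ with
  | nil => simp at h
  | cons a t =>
    have h1 : w₁.length ≤ t.length := by simpa [Nat.lt_succ_iff] using h
    calc enc w₁ < (m + 1) ^ w₁.length := enc_lt w₁
      _ ≤ (m + 1) ^ t.length := Nat.pow_le_pow_right (by omega) h1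
      _ ≤ enc (a :: t) := le_enc a t

lemma enc_lt_of_lex {w₁ w₂ : List (Fin m)} (h : List.Lex (· < ·) w₁ w₂) :
    w₁.length = w₂.length → enc w₁ < enc w₂ := by
  induction h with
  | nil => intro hl; simp at hl
  | @cons a l₁ l₂ h ih =>
    intro hl
    have hl' : l₁.length = l₂.length := by simpa using hl
    have := ih hl'
    show ((a : ℕ) + 1) * (m + 1) ^ l₁.length + enc l₁ <
      ((a : ℕ) + 1) * (m + 1) ^ l₂.length + enc l₂
    rw [hl']; omega
  | @rel a l₁ b l₂ hab =>
    intro hl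
    have hl' : l₁.length = l₂.length := by simpa using hl
    have hab' : (a : ℕ) < (b : ℕ) := hab
    calc enc (a :: l₁) = ((a : ℕ) + 1) * (m + 1) ^ l₁.length + enc l₁ := rfl
      _ < ((a : ℕ) + 1) * (m + 1) ^ l₁.length + (m + 1) ^ l₁.length := by
          have := enc_lt l₁; omega
      _ = ((a : ℕ) + 2) * (m + 1) ^ l₁.length := by ring
      _ ≤ ((b : ℕ) + 1) * (m + 1) ^ l₂.length := by
          rw [hl']; exact Nat.mul_le_mul_right _ (by omega)
      _ ≤ enc (b :: l₂) := Nat.le_add_right _ _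

lemma enc_lt_of_wordLT {w₁ w₂ : List (Fin m)} (h : WordLT w₁ w₂) : enc w₁ < enc w₂ := by
  rcases h with h | ⟨hl, hlex⟩
  · exact enc_lt_of_length_lt h
  · exact enc_lt_of_lex hlex hl

lemma wordLT_wf : WellFounded (@WordLT m) :=
  Subrelation.wf (fun h => enc_lt_of_wordLT h) (InvImage.wf enc Nat.lt_wfRel.wf)

lemma wordLT_total (w₁ w₂ : List (Fin m)) (h : w₁ ≠ w₂) : WordLT w₁ w₂ ∨ WordLT w₂ w₁ := by
  rcases lt_trichotomy w₁.length w₂.length with hl | hl | hl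
  · exact Or.inl (Or.inl hl)
  · rcases trichotomous_of (List.Lex ((· < ·) : Fin m → Fin m → Prop)) w₁ w₂ with hx | hx | hx
    · exact Or.inl (Or.inr ⟨hl, hx⟩)
    · exact absurd hx h
    · exact Or.inr (Or.inr ⟨hl.symm, hx⟩)
  · exact Or.inr (Or.inl hl)

end PivotAux

open PivotAux in
theorem pivot_basis {K : Type*} [Field K] {n m : ℕ}
    (C : Fin m → Matrix (Fin n) (Fin n) K) :
    LinearIndependent K
      (fun w : {w : List (Fin m) // Pivot C w} => ((w : List (Fin m)).map C).prod) ∧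
    Submodule.span K
        (Set.range fun w : {w : List (Fin m) // Pivot C w} => ((w : List (Fin m)).map C).prod) =
      Subalgebra.toSubmodule (Algebra.adjoin K (Set.range C)) := by
  set v : {w : List (Fin m) // Pivot C w} → Matrix (Fin n) (Fin n) K :=
    fun w => ((w : List (Fin m)).map C).prod with hv
  set pivSpan := Submodule.span K (Set.range v) with hpiv
  -- every word product lies in the span of the pivot products
  have all_mem : ∀ w : List (Fin m), ((w.map C).prod) ∈ pivSpan := by
    intro w
    refine @WellFounded.induction _ _ wordLT_wf (fun w => ((w.map C).prod) ∈ pivSpan) w ?_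
    intro w ih
    by_cases hw : Pivot C w
    · exact Submodule.subset_span ⟨⟨w, hw⟩, rfl⟩
    · unfold Pivot at hw
      rw [not_not] at hw
      refine Submodule.span_le.mpr ?_ hw
      rintro M ⟨u, hu, rfl⟩
      exact ih u hu
  constructor
  · -- linear independence
    rw [linearIndependent_iff]
    intro l hl
    by_contra hne
    have hsupp : l.support.Nonempty := Finsupp.support_nonempty_iff.mpr hne
    obtain ⟨ws, hwsmem, hmax⟩ :=
      l.support.exists_max_image (fun w => enc (w : List (Fin m))) hsupp
    have h0 : l ws ≠ 0 := Finsupp.mem_support_iff.mp hwsmem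
    set S : Set (Matrix (Fin n) (Fin n) K) :=
      {M | ∃ u : List (Fin m), WordLT u (ws : List (Fin m)) ∧ M = (u.map C).prod} with hS
    have key : ∀ u ∈ l.support.erase ws, l u • v u ∈ Submodule.span K S := by
      intro u hu
      obtain ⟨hne', humem⟩ := Finset.mem_erase.mp hu
      have hvne : (u : List (Fin m)) ≠ (ws : List (Fin m)) :=
        fun hh => hne' (Subtype.ext hh)
      have hlt : WordLT (u : List (Fin m)) (ws : List (Fin m)) := by
        rcases wordLT_total _ _ hvne with h | h
        · exact h
        · exact absurd (hmax u humem) (not_le.mpr (enc_lt_of_wordLT h))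
      exact Submodule.smul_mem _ _ (Submodule.subset_span ⟨u, hlt, rfl⟩)
    have hsum : ∑ u ∈ l.support.erase ws, l u • v u + l ws • v ws = 0 := by
      rw [Finset.sum_erase_add _ _ hwsmem]
      rw [Finsupp.linearCombination_apply, Finsupp.sum] at hl
      exact hl
    have hmem : l ws • v ws ∈ Submodule.span K S := by
      have h1 : ∑ u ∈ l.support.erase ws, l u • v u ∈ Submodule.span K S :=
        Submodule.sum_mem _ key
      have h2 : l ws • v ws = -(∑ u ∈ l.support.erase ws, l u • v u) := by
        rw [eq_neg_iff_add_eq_zero, add_comm]; exact hsum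
      rw [h2]; exact Submodule.neg_mem _ h1
    have hmem' : v ws ∈ Submodule.span K S := by
      have := Submodule.smul_mem _ (l ws)⁻¹ hmem
      rwa [inv_smul_smul₀ h0] at this
    exact ws.2 hmem'
  · -- span equality
    have hclos : (Submonoid.closure (Set.range C) : Set (Matrix (Fin n) (Fin n) K)) =
        {M | ∃ w : List (Fin m), M = (w.map C).prod} := by
      ext x
      constructor
      · intro hx
        obtain ⟨l, hl, hprod⟩ := Submonoid.exists_list_of_mem_closure hx
        have : ∀ l' : List (Matrix (Fin n) (Fin n) K), (∀ y ∈ l', y ∈ Set.range C) →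
            ∃ w : List (Fin m), l' = w.map C := by
          intro l' hl'
          induction l' with
          | nil => exact ⟨[], rfl⟩
          | cons y t ih =>
            obtain ⟨i, hi⟩ := hl' y List.mem_cons_self
            obtain ⟨w, hw⟩ := ih fun z hz => hl' z (List.mem_cons_of_mem _ hz)
            exact ⟨i :: w, by simp [hi, ← hw]⟩
        obtain ⟨w, hw⟩ := this l hl
        exact ⟨w, by rw [← hprod, hw]⟩
      · rintro ⟨w, rfl⟩
        refine Submonoid.list_prod_mem _ ?_
        intro x hx
        obtain ⟨i, _, rfl⟩ := List.mem_map.mp hx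
        exact Submonoid.subset_closure ⟨i, rfl⟩
    have hadj : Subalgebra.toSubmodule (Algebra.adjoin K (Set.range C)) =
        Submodule.span K {M : Matrix (Fin n) (Fin n) K | ∃ w : List (Fin m), M = (w.map C).prod} := by
      rw [Algebra.adjoin_eq_span, hclos]
    rw [hadj]
    apply le_antisymm
    · refine Submodule.span_le.mpr ?_
      rintro M ⟨w, rfl⟩
      exact Submodule.subset_span ⟨(w : List (Fin m)), rfl⟩
    · refine Submodule.span_le.mpr ?_
      rintro M ⟨w, rfl⟩
      exact all_mem w
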